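/- The eventually different reals partial order 𝔼 does not have (ω₁,ω)-caliber. Concretely: if {f_α : α < ω₁} is a family of ω₁-many pairwise eventually different functions ℕ → ℕ, then T = {(⟨⟩, {f_α}) : α < ω₁} is an uncountable set of conditions in 𝔼 such that no countably infinite subset F ⊆ T has a common lower bound in 𝔼. -/
import Mathlib


noncomputable section

/-- A condition of Miller's eventually different reals partial order `𝔼`: a pair `(s, G)`
where `s` is a finite sequence of natural numbers and `G` is a finite set of functions
`ℕ → ℕ`. -/
abbrev ECond : Type := List ℕ × Finset (ℕ → ℕ)

/-- The order of `𝔼`: `(s,G) ≤ (t,H)` iff `s ⊇ t`, `G ⊇ H`, and `s(i) ≠ g(i)` for every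
`g ∈ H` and every `i` with `|t| ≤ i < |s|`. -/
def ELe (p q : ECond) : Prop :=
  q.1 <+: p.1 ∧ q.2 ⊆ p.2 ∧
    ∀ g ∈ q.2, ∀ i : ℕ, q.1.length ≤ i → ∀ h : i < p.1.length, p.1.get ⟨i, h⟩ ≠ g i

/-- The eventually different reals partial order `𝔼` does not have `(ω₁, ω)`-caliber: given
`ω₁`-many pairwise eventually different functions `f_a : ℕ → ℕ`, the set
`T = {(⟨⟩, {f_a})}` is an uncountable set of conditions of `𝔼` no countably infinite
subset of which has a common lower bound in `𝔼`. -/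
theorem E_not_caliber_omega1_omega (ι : Type) (f : ι → ℕ → ℕ)
    (hcard : Cardinal.mk ι = Cardinal.aleph 1)
    (hed : ∀ a b : ι, a ≠ b → ∃ n : ℕ, ∀ k ≥ n, f a k ≠ f b k) :
    ¬ (Set.Countable {p : ECond | ∃ a : ι, p = (([] : List ℕ), ({f a} : Finset (ℕ → ℕ)))}) ∧
    ∀ F ⊆ {p : ECond | ∃ a : ι, p = (([] : List ℕ), ({f a} : Finset (ℕ → ℕ)))},
      F.Countable → F.Infinite → ¬ ∃ q : ECond, ∀ p ∈ F, ELe q p := by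
  have hfinj : Function.Injective f := by
    intro a b hab
    by_contra hne
    obtain ⟨n, hn⟩ := hed a b hne
    exact hn n le_rfl (by rw [hab])
  constructor
  · intro hcnt
    have : Cardinal.mk ι ≤ Cardinal.mk {p : ECond | ∃ a : ι, p = (([] : List ℕ), ({f a} : Finset (ℕ → ℕ)))} := by
      apply Cardinal.mk_le_of_injective (f := fun a => (⟨(([] : List ℕ), ({f a} : Finset (ℕ → ℕ))), ⟨a, rfl⟩⟩ : {p : ECond | ∃ a : ι, p = (([] : List ℕ), ({f a} : Finset (ℕ → ℕ)))}))
      intro a b h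
      have h2 : ({f a} : Finset (ℕ → ℕ)) = {f b} := by
        simpa using congrArg (fun x => x.1.2) h
      exact hfinj (Finset.singleton_injective h2)
    rw [hcard] at this
    have hle : Cardinal.mk {p : ECond | ∃ a : ι, p = (([] : List ℕ), ({f a} : Finset (ℕ → ℕ)))} ≤ Cardinal.aleph0 := by
      rwa [Cardinal.mk_le_aleph0_iff, ← Set.countable_coe_iff] at *
    exact absurd (this.trans hle) (not_le.mpr Cardinal.aleph0_lt_aleph_one)
  · intro F hF hcnt hinf ⟨q, hq⟩
    apply hinf
    have : F ⊆ (fun g : ℕ → ℕ => (([] : List ℕ), ({g} : Finset (ℕ → ℕ)))) '' (↑q.2) := by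
      intro p hp
      obtain ⟨a, ha⟩ := hF hp
      refine ⟨f a, ?_, ha.symm⟩
      have := (hq p hp).2.1
      rw [ha] at this
      exact this (Finset.mem_singleton_self _)
    exact Set.Finite.subset (Set.Finite.image _ q.2.finite_toSet) this

end
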